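/- (Proposition 2 of the paper) Suppose O = ⋂_{i=1}^{K} Pᵢ and V = ⋂_{j=1}^{L} Qⱼ are nonempty intersections of primitives in ℝⁿ, with all relevant Minkowski differences proper nonempty subsets of ℝⁿ. Then max( max_j sd(0, O - Qⱼ), max_i sd(0, Pᵢ - V) ) ≤ sd(V, O). -/
import Mathlib


/-- Minkowski (pairwise) difference of sets. -/
def minkDiff {n : ℕ} (X Y : Set (EuclideanSpace ℝ (Fin n))) : Set (EuclideanSpace ℝ (Fin n)) :=
  {z | ∃ x ∈ X, ∃ y ∈ Y, z = x - y}

/-- Distance between sets: `dist(V,O) = inf{‖p‖ : (V + p) ∩ O ≠ ∅}`. -/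
noncomputable def distSet {n : ℕ} (V O : Set (EuclideanSpace ℝ (Fin n))) : ℝ :=
  sInf {r : ℝ | ∃ p : EuclideanSpace ℝ (Fin n),
    (((fun v => v + p) '' V) ∩ O).Nonempty ∧ r = ‖p‖}

/-- Penetration between sets: `pen(V,O) = inf{‖p‖ : (V + p) ∩ O = ∅}`. -/
noncomputable def penSet {n : ℕ} (V O : Set (EuclideanSpace ℝ (Fin n))) : ℝ :=
  sInf {r : ℝ | ∃ p : EuclideanSpace ℝ (Fin n),
    ((fun v => v + p) '' V) ∩ O = ∅ ∧ r = ‖p‖}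

/-- Signed distance from a point to a set. -/
noncomputable def sdPt {n : ℕ} (x : EuclideanSpace ℝ (Fin n))
    (S : Set (EuclideanSpace ℝ (Fin n))) : ℝ :=
  Metric.infDist x S - Metric.infDist x Sᶜ

lemma infDist_eq_sInf' {n : ℕ} (x : EuclideanSpace ℝ (Fin n))
    (s : Set (EuclideanSpace ℝ (Fin n))) :
    Metric.infDist x s = sInf (dist x '' s) := by
  rw [Metric.infDist_eq_iInf, sInf_image']

lemma mem_minkDiff_iff {n : ℕ} (O V : Set (EuclideanSpace ℝ (Fin n)))
    (p : EuclideanSpace ℝ (Fin n)) :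
    p ∈ minkDiff O V ↔ ((fun v => v + p) '' V ∩ O).Nonempty := by
  constructor
  · rintro ⟨o, ho, v, hv, rfl⟩
    refine ⟨o, ⟨v, hv, ?_⟩, ho⟩
    show v + (o - v) = o
    rw [add_comm]; exact sub_add_cancel o v
  · rintro ⟨x, ⟨v, hv, rfl⟩, hx⟩
    exact ⟨v + p, hx, v, hv, (add_sub_cancel_left v p).symm⟩

lemma distSet_sub_penSet_eq {n : ℕ} (V O : Set (EuclideanSpace ℝ (Fin n))) :
    distSet V O - penSet V O = sdPt 0 (minkDiff O V) := by
  unfold distSet penSet sdPt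
  rw [infDist_eq_sInf', infDist_eq_sInf']
  congr 2
  · ext r
    simp only [Set.mem_setOf_eq, Set.mem_image, dist_zero_left]
    constructor
    · rintro ⟨p, hp, rfl⟩
      exact ⟨p, (mem_minkDiff_iff O V p).2 hp, rfl⟩
    · rintro ⟨p, hp, rfl⟩
      exact ⟨p, (mem_minkDiff_iff O V p).1 hp, rfl⟩
  · ext r
    simp only [Set.mem_setOf_eq, Set.mem_image, Set.mem_compl_iff, dist_zero_left]
    constructor
    · rintro ⟨p, hp, rfl⟩
      refine ⟨p, fun h => ?_, rfl⟩
      rcases (mem_minkDiff_iff O V p).1 h with ⟨x, hx⟩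
      exact absurd hp (by intro he; rw [he] at hx; exact hx)
    · rintro ⟨p, hp, rfl⟩
      refine ⟨p, ?_, rfl⟩
      by_contra h
      exact hp ((mem_minkDiff_iff O V p).2 (Set.nonempty_iff_ne_empty.2 h))

lemma sdPt_anti {n : ℕ} (x : EuclideanSpace ℝ (Fin n))
    {S S' : Set (EuclideanSpace ℝ (Fin n))} (hS : S.Nonempty)
    (hS' : S' ≠ Set.univ) (h : S ⊆ S') : sdPt x S' ≤ sdPt x S :=
  sub_le_sub (Metric.infDist_le_infDist_of_subset h hS)
    (Metric.infDist_le_infDist_of_subset (Set.compl_subset_compl.2 h)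
      (Set.nonempty_compl.2 hS'))

/-- Proposition 2: if the obstacle `O = ⋂ i, P i` and the controlled system
`V = ⋂ j, Q j` are nonempty intersections of nonempty primitives, with all
relevant Minkowski differences proper subsets of `ℝⁿ`, then the signed
distances from the origin to the primitive Minkowski differences `O - Q j` and
`P i - V` are lower bounds for the signed distance `sd(V,O)`. -/
theorem max_sd_minkDiff_primitives_le_sd_sets {n K L : ℕ}
    (P : Fin K → Set (EuclideanSpace ℝ (Fin n)))
    (Q : Fin L → Set (EuclideanSpace ℝ (Fin n)))
    (O V : Set (EuclideanSpace ℝ (Fin n)))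
    (hO : O = ⋂ i, P i) (hV : V = ⋂ j, Q j)
    (hOne : O.Nonempty) (hVne : V.Nonempty)
    (hPne : ∀ i, (P i).Nonempty) (hQne : ∀ j, (Q j).Nonempty)
    (hPd : ∀ i, minkDiff (P i) V ≠ Set.univ)
    (hQd : ∀ j, minkDiff O (Q j) ≠ Set.univ)
    (hOVd : minkDiff O V ≠ Set.univ) :
    (∀ j, sdPt 0 (minkDiff O (Q j)) ≤ distSet V O - penSet V O) ∧
    (∀ i, sdPt 0 (minkDiff (P i) V) ≤ distSet V O - penSet V O) := by
  rw [distSet_sub_penSet_eq]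
  obtain ⟨o, ho⟩ := hOne
  obtain ⟨v, hv⟩ := hVne
  have hne : (minkDiff O V).Nonempty := ⟨o - v, o, ho, v, hv, rfl⟩
  constructor
  · intro j
    refine sdPt_anti 0 hne (hQd j) ?_
    have hVQ : V ⊆ Q j := by rw [hV]; exact Set.iInter_subset _ j
    rintro z ⟨x, hx, y, hy, rfl⟩
    exact ⟨x, hx, y, hVQ hy, rfl⟩
  · intro i
    refine sdPt_anti 0 hne (hPd i) ?_
    have hOP : O ⊆ P i := by rw [hO]; exact Set.iInter_subset _ i
    rintro z ⟨x, hx, y, hy, rfl⟩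
    exact ⟨x, hOP hx, y, hy, rfl⟩
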